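/- arXiv:1209.4416 — 3 statements merged into one kernel-verified Lean document; each statement's English description precedes it below -/
import Mathlib

section
/- Let T > 0, let ξ, η : [0,T] → ℂ be continuous with ξ(t) ≠ 0 for all t ∈ [0,T], and let θ̃ : [0,T] → ℝ be continuous. Define Φ(ε) := (1/2) ∫₀ᵀ | (ξ(t) + ε η(t))/|ξ(t) + ε η(t)| − e^{i θ̃(t)} |² dt. Then Φ is differentiable at ε = 0 and Φ'(0) = ∫₀ᵀ Im( (ξ(t)/|ξ(t)|) · e^{−i θ̃(t)} ) · Im( conj(ξ(t)) · η(t) ) / |ξ(t)|² dt. -/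
open intervalIntegral Complex

private lemma ptwise (u w : ℂ) (hu : u ≠ 0) (hw : ‖w‖ = 1) :
    (‖u / ((‖u‖ : ℝ) : ℂ) - w‖)^2
      = 2 - 2 * (u * (starRingEnd ℂ) w).re / ‖u‖ := by
  have hu' : ‖u‖ ≠ 0 := by simpa using hu
  rw [Complex.sq_norm, Complex.normSq_sub]
  have h1 : normSq (u / ((‖u‖ : ℝ) : ℂ)) = 1 := by
    rw [Complex.normSq_div]
    simp [Complex.normSq_eq_norm_sq, hu']
  have h2 : normSq w = 1 := by rw [Complex.normSq_eq_norm_sq, hw]; norm_num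
  have h3 : (u / ((‖u‖ : ℝ) : ℂ) * (starRingEnd ℂ) w).re
      = (u * (starRingEnd ℂ) w).re / ‖u‖ := by
    rw [div_mul_eq_mul_div, Complex.div_ofReal_re]
  rw [h1, h2, h3]; ring

private lemma normDeriv (x y : ℂ) (ε₀ : ℝ) (h : x + ε₀ • y ≠ 0) :
    HasDerivAt (fun ε : ℝ => ‖x + ε • y‖)
      (((starRingEnd ℂ) (x + ε₀ • y) * y).re / ‖x + ε₀ • y‖) ε₀ := by
  have hfun : ∀ ε : ℝ, ‖x + ε • y‖
      = Real.sqrt ((x.re + ε * y.re)^2 + (x.im + ε * y.im)^2) := by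
    intro ε
    rw [Complex.norm_def, Complex.normSq_apply]
    norm_num [Complex.add_re, Complex.add_im, Complex.real_smul, pow_two]
  have hS : (x.re + ε₀ * y.re)^2 + (x.im + ε₀ * y.im)^2 ≠ 0 := by
    intro hc
    apply h
    have h1 : x.re + ε₀ * y.re = 0 ∧ x.im + ε₀ * y.im = 0 := by
      constructor <;> nlinarith [sq_nonneg (x.re + ε₀*y.re), sq_nonneg (x.im + ε₀*y.im)]
    apply Complex.ext <;> simp [Complex.real_smul, h1.1, h1.2]
  have hin : HasDerivAt (fun ε : ℝ => (x.re + ε * y.re)^2 + (x.im + ε * y.im)^2)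
      (2*(x.re + ε₀*y.re)*y.re + 2*(x.im + ε₀*y.im)*y.im) ε₀ := by
    have := ((hasDerivAt_id ε₀).const_mul y.re).const_add x.re
    have h2 := ((hasDerivAt_id ε₀).const_mul y.im).const_add x.im
    simpa [mul_comm] using ((this.fun_pow 2).fun_add (h2.fun_pow 2))
  have := (Real.hasDerivAt_sqrt hS).comp ε₀ hin
  rw [funext hfun]
  refine this.congr_deriv ?_
  have hSpos : 0 < (x.re + ε₀ * y.re)^2 + (x.im + ε₀ * y.im)^2 :=
    lt_of_le_of_ne (by positivity) (Ne.symm hS)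
  have hs : Real.sqrt ((x.re + ε₀ * y.re)^2 + (x.im + ε₀ * y.im)^2) ≠ 0 :=
    ne_of_gt (Real.sqrt_pos.2 hSpos)
  have hre : ((starRingEnd ℂ) (x + ε₀ • y) * y).re
      = (x.re + ε₀ * y.re) * y.re + (x.im + ε₀ * y.im) * y.im := by
    simp [Complex.mul_re, Complex.add_re, Complex.add_im, Complex.real_smul]
    ring
  rw [hre, hfun ε₀]
  field_simp

private lemma keyDeriv (x y w : ℂ) (hw : ‖w‖ = 1) (ε₀ : ℝ) (h : x + ε₀ • y ≠ 0) :
    HasDerivAt (fun ε : ℝ => (‖(x + ε • y) / ((‖x + ε • y‖ : ℝ) : ℂ) - w‖)^2)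
      (2 * (((x + ε₀ • y) * (starRingEnd ℂ) w).re * ((starRingEnd ℂ) (x + ε₀ • y) * y).re
          / (‖x + ε₀ • y‖)^3
        - (y * (starRingEnd ℂ) w).re / ‖x + ε₀ • y‖)) ε₀ := by
  set r := ‖x + ε₀ • y‖ with hr
  have hrpos : 0 < r := by simpa [hr] using (norm_pos_iff.mpr h)
  have hrne : r ≠ 0 := ne_of_gt hrpos
  have hnum : HasDerivAt (fun ε : ℝ => ((x + ε • y) * (starRingEnd ℂ) w).re)
      ((y * (starRingEnd ℂ) w).re) ε₀ := by
    have heq : ∀ ε : ℝ, ((x + ε • y) * (starRingEnd ℂ) w).re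
        = (x * (starRingEnd ℂ) w).re + ε * (y * (starRingEnd ℂ) w).re := by
      intro ε
      simp [add_mul, Complex.add_re, Complex.real_smul, Complex.mul_re, Complex.ofReal_mul]
      ring
    rw [funext heq]
    simpa [mul_comm] using ((hasDerivAt_id ε₀).const_mul ((y * (starRingEnd ℂ) w).re)).const_add
      ((x * (starRingEnd ℂ) w).re)
  have hden := normDeriv x y ε₀ h
  have hdiv := hnum.div hden (by simpa [hr] using hrne)
  have hg : HasDerivAt (fun ε : ℝ => 2 - 2 * (((x + ε • y) * (starRingEnd ℂ) w).re / ‖x + ε • y‖))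
      (2 * (((x + ε₀ • y) * (starRingEnd ℂ) w).re * ((starRingEnd ℂ) (x + ε₀ • y) * y).re / r^3
        - (y * (starRingEnd ℂ) w).re / r)) ε₀ := by
    have := (hdiv.const_mul (2:ℝ)).const_sub 2
    refine this.congr_deriv ?_
    rw [← hr]
    field_simp
    ring
  apply hg.congr_of_eventuallyEq
  have hopen : IsOpen {ε : ℝ | x + ε • y ≠ 0} := by
    have : Continuous fun ε : ℝ => x + ε • y := by continuity
    exact isOpen_ne.preimage this
  filter_upwards [hopen.mem_nhds h] with ε hε
  rw [ptwise _ _ hε hw, mul_div_assoc]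

private lemma finalId (ξ η e : ℂ) (h : ξ ≠ 0) :
    (1/2) * (2 * ((ξ * e).re * ((starRingEnd ℂ) ξ * η).re / (‖ξ‖)^3
        - (η * e).re / ‖ξ‖))
      = ((ξ / ((‖ξ‖ : ℝ) : ℂ)) * e).im * ((starRingEnd ℂ) ξ * η).im / (‖ξ‖)^2 := by
  set r := ‖ξ‖ with hrdef
  have hrpos : 0 < r := norm_pos_iff.mpr h
  have hrne : r ≠ 0 := ne_of_gt hrpos
  have hr2 : r^2 = ξ.re^2 + ξ.im^2 := by
    rw [hrdef, Complex.sq_norm, Complex.normSq_apply]; ring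
  have him : ((ξ / ((r : ℝ) : ℂ)) * e).im = (ξ * e).im / r := by
    rw [div_mul_eq_mul_div, Complex.div_ofReal_im]
  rw [him]
  simp only [Complex.mul_re, Complex.mul_im, Complex.conj_re, Complex.conj_im]
  field_simp
  linear_combination (-1 * (e.re*η.re - e.im*η.im)) * hr2

private lemma conjExp (θ : ℝ) :
    (starRingEnd ℂ) (Complex.exp (Complex.I * (θ:ℂ))) = Complex.exp (-Complex.I * (θ:ℂ)) := by
  rw [← Complex.exp_conj]; congr 1; simp [Complex.conj_I]

theorem gateaux_differential_phase_cost (T : ℝ) (hT : 0 < T)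
    (ξ η : ℝ → ℂ) (θmeas : ℝ → ℝ)
    (hξ : ContinuousOn ξ (Set.Icc 0 T)) (hη : ContinuousOn η (Set.Icc 0 T))
    (hξ0 : ∀ t ∈ Set.Icc 0 T, ξ t ≠ 0) (hθm : ContinuousOn θmeas (Set.Icc 0 T)) :
    HasDerivAt
      (fun ε : ℝ => (1/2) * ∫ t in (0:ℝ)..T,
        (‖(ξ t + ε • η t) / ((‖ξ t + ε • η t‖ : ℝ) : ℂ)
          - Complex.exp (Complex.I * (θmeas t : ℂ))‖)^2)
      (∫ t in (0:ℝ)..T,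
        ((ξ t / ((‖ξ t‖ : ℝ) : ℂ)) * Complex.exp (-Complex.I * (θmeas t : ℂ))).im
          * ((starRingEnd ℂ) (ξ t) * η t).im / (‖ξ t‖)^2) 0 := by
  -- compactness bounds
  have hIcc : (Set.Icc (0:ℝ) T).Nonempty := ⟨0, by constructor <;> [rfl; exact hT.le]⟩
  have hξabs : ContinuousOn (fun t => ‖ξ t‖) (Set.Icc 0 T) :=
    continuous_norm.comp_continuousOn hξ
  obtain ⟨t₀, ht₀, hct₀'⟩ := isCompact_Icc.exists_isMinOn hIcc hξabs
  have hct₀ : ∀ t ∈ Set.Icc 0 T, ‖ξ t₀‖ ≤ ‖ξ t‖ := fun t ht => hct₀' ht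
  set c := ‖ξ t₀‖ with hc
  have hcpos : 0 < c := norm_pos_iff.mpr (hξ0 t₀ ht₀)
  obtain ⟨t₁, ht₁, hMt₁'⟩ := isCompact_Icc.exists_isMaxOn hIcc
    (continuous_norm.comp_continuousOn hη)
  have hMt₁ : ∀ t ∈ Set.Icc 0 T, ‖η t‖ ≤ ‖η t₁‖ := fun t ht => hMt₁' ht
  set M : ℝ := ‖η t₁‖ + 1 with hM
  have hMpos : 0 < M := by positivity
  have hMb : ∀ t ∈ Set.Icc 0 T, ‖η t‖ ≤ M := fun t ht =>
    le_trans (hMt₁ t ht) (by simp [hM])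
  set δ : ℝ := c / (2 * M) with hδ
  have hδpos : 0 < δ := by positivity
  -- lower bound for perturbed modulus
  have hlow : ∀ ε ∈ Metric.ball (0:ℝ) δ, ∀ t ∈ Set.Icc 0 T,
      c/2 ≤ ‖ξ t + ε • η t‖ := by
    intro ε hε t ht
    have hεle : |ε| ≤ δ := le_of_lt (by simpa [Real.dist_eq] using hε)
    have h1 : ‖ε • η t‖ ≤ δ * M := by
      rw [Complex.real_smul, norm_mul, Complex.norm_real, Real.norm_eq_abs]
      exact mul_le_mul hεle (hMb t ht) (norm_nonneg _) hδpos.le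
    have h2 : δ * M = c / 2 := by rw [hδ]; field_simp
    have h3 : c ≤ ‖ξ t‖ := hct₀ t ht
    have h4 : ‖ξ t‖ - ‖ε • η t‖ ≤ ‖ξ t + ε • η t‖ := by
      have := norm_sub_norm_le (ξ t) (-(ε • η t))
      simpa [sub_neg_eq_add] using this
    nlinarith [hcpos, hMpos, hδpos]
  -- nonvanishing on the ball
  have hball : ∀ ε ∈ Metric.ball (0:ℝ) δ, ∀ t ∈ Set.Icc 0 T, ξ t + ε • η t ≠ 0 := by
    intro ε hε t ht h0
    have := hlow ε hε t ht
    rw [h0] at this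
    simp at this
    linarith [hcpos]
  have habsexp : ∀ t : ℝ, ‖Complex.exp (Complex.I * (θmeas t : ℂ))‖ = 1 := by
    intro t; simp [Complex.norm_exp]
  -- continuity of F on the ball
  have hFcont : ∀ ε ∈ Metric.ball (0:ℝ) δ, ContinuousOn
      (fun t => (‖(ξ t + ε • η t) / ((‖ξ t + ε • η t‖ : ℝ) : ℂ)
          - Complex.exp (Complex.I * (θmeas t : ℂ))‖)^2) (Set.Icc 0 T) := by
    intro ε hε
    have hu : ContinuousOn (fun t => ξ t + ε • η t) (Set.Icc 0 T) := hξ.add (hη.const_smul ε)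
    have habs : ContinuousOn (fun t => ((‖ξ t + ε • η t‖ : ℝ) : ℂ)) (Set.Icc 0 T) :=
      Complex.continuous_ofReal.comp_continuousOn (continuous_norm.comp_continuousOn hu)
    have hne : ∀ t ∈ Set.Icc 0 T, ((‖ξ t + ε • η t‖ : ℝ) : ℂ) ≠ 0 := fun t ht =>
      Complex.ofReal_ne_zero.2 (norm_ne_zero_iff.mpr (hball ε hε t ht))
    have hexp : ContinuousOn (fun t => Complex.exp (Complex.I * (θmeas t : ℂ))) (Set.Icc 0 T) :=
      Complex.continuous_exp.comp_continuousOn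
        (continuousOn_const.mul (Complex.continuous_ofReal.comp_continuousOn hθm))
    exact (continuous_norm.comp_continuousOn ((hu.div habs hne).sub hexp)).pow 2
  have hexpm : ContinuousOn (fun t => Complex.exp (-Complex.I * (θmeas t : ℂ))) (Set.Icc 0 T) :=
    Complex.continuous_exp.comp_continuousOn
      (continuousOn_const.mul (Complex.continuous_ofReal.comp_continuousOn hθm))
  -- the dominated convergence derivative lemma
  obtain ⟨-, hD⟩ := intervalIntegral.hasDerivAt_integral_of_dominated_loc_of_deriv_le
    (𝕜 := ℝ) (μ := MeasureTheory.volume) (a := 0) (b := T) (x₀ := 0) (s := Metric.ball 0 δ)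
    (bound := fun _ => 8 * M / c)
    (F := fun ε t => (‖(ξ t + ε • η t) / ((‖ξ t + ε • η t‖ : ℝ) : ℂ)
          - Complex.exp (Complex.I * (θmeas t : ℂ))‖)^2)
    (F' := fun ε t => 2 * (((ξ t + ε • η t) * Complex.exp (-Complex.I * (θmeas t : ℂ))).re
          * ((starRingEnd ℂ) (ξ t + ε • η t) * η t).re / (‖ξ t + ε • η t‖)^3
        - (η t * Complex.exp (-Complex.I * (θmeas t : ℂ))).re / ‖ξ t + ε • η t‖))
    (Metric.ball_mem_nhds 0 hδpos)
    (by -- hF_meas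
      filter_upwards [Metric.ball_mem_nhds (0:ℝ) hδpos] with ε hε
      rw [Set.uIoc_of_le hT.le]
      exact ((hFcont ε hε).mono Set.Ioc_subset_Icc_self).aestronglyMeasurable measurableSet_Ioc)
    (by -- hF_int
      apply ContinuousOn.intervalIntegrable
      rw [Set.uIcc_of_le hT.le]
      exact hFcont 0 (Metric.mem_ball_self hδpos))
    (by -- hF'_meas
      rw [Set.uIoc_of_le hT.le]
      have hu : ContinuousOn (fun t => ξ t + (0:ℝ) • η t) (Set.Icc 0 T) :=
        hξ.add (hη.const_smul (0:ℝ))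
      have hne : ∀ t ∈ Set.Icc 0 T, ξ t + (0:ℝ) • η t ≠ 0 :=
        hball 0 (Metric.mem_ball_self hδpos)
      have habs : ContinuousOn (fun t => ‖ξ t + (0:ℝ) • η t‖) (Set.Icc 0 T) :=
        continuous_norm.comp_continuousOn hu
      have h1 : ContinuousOn (fun t => ((ξ t + (0:ℝ) • η t)
          * Complex.exp (-Complex.I * (θmeas t : ℂ))).re) (Set.Icc 0 T) :=
        Complex.continuous_re.comp_continuousOn (hu.mul hexpm)
      have h2 : ContinuousOn (fun t => ((starRingEnd ℂ) (ξ t + (0:ℝ) • η t) * η t).re)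
          (Set.Icc 0 T) :=
        Complex.continuous_re.comp_continuousOn
          ((Complex.continuous_conj.comp_continuousOn hu).mul hη)
      have h3 : ContinuousOn (fun t => (η t
          * Complex.exp (-Complex.I * (θmeas t : ℂ))).re) (Set.Icc 0 T) :=
        Complex.continuous_re.comp_continuousOn (hη.mul hexpm)
      have hcont : ContinuousOn (fun t => 2 * (((ξ t + (0:ℝ) • η t)
            * Complex.exp (-Complex.I * (θmeas t : ℂ))).re
          * ((starRingEnd ℂ) (ξ t + (0:ℝ) • η t) * η t).re / (‖ξ t + (0:ℝ) • η t‖)^3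
        - (η t * Complex.exp (-Complex.I * (θmeas t : ℂ))).re
            / ‖ξ t + (0:ℝ) • η t‖)) (Set.Icc 0 T) := by
        apply ContinuousOn.mul continuousOn_const
        apply ContinuousOn.sub
        · exact (h1.mul h2).div (habs.pow 3) (fun t ht => by
            exact pow_ne_zero 3 (norm_ne_zero_iff.mpr (hne t ht)))
        · exact h3.div habs (fun t ht => norm_ne_zero_iff.mpr (hne t ht))
      exact (hcont.mono Set.Ioc_subset_Icc_self).aestronglyMeasurable measurableSet_Ioc)
    (by -- h_bound
      apply Filter.Eventually.of_forall
      intro t ht ε hε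
      rw [Set.uIoc_of_le hT.le] at ht
      have htI : t ∈ Set.Icc 0 T := Set.Ioc_subset_Icc_self ht
      set u : ℂ := ξ t + ε • η t with hu
      set r : ℝ := ‖u‖ with hrdef
      have hrc : c / 2 ≤ r := hlow ε hε t htI
      have hr0 : 0 < r := lt_of_lt_of_le (by positivity) hrc
      have habse : ‖Complex.exp (-Complex.I * (θmeas t : ℂ))‖ = 1 := by
        simp [Complex.norm_exp]
      set N : ℝ := (u * Complex.exp (-Complex.I * (θmeas t : ℂ))).re with hN'
      set R : ℝ := ((starRingEnd ℂ) u * η t).re with hR'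
      set B : ℝ := (η t * Complex.exp (-Complex.I * (θmeas t : ℂ))).re with hB'
      have hN : |N| ≤ r := by
        calc |N| ≤ ‖u * Complex.exp (-Complex.I * (θmeas t : ℂ))‖ :=
              Complex.abs_re_le_norm _
          _ = r := by rw [norm_mul, habse, mul_one]
      have hR : |R| ≤ r * M := by
        calc |R| ≤ ‖(starRingEnd ℂ) u * η t‖ := Complex.abs_re_le_norm _
          _ = r * ‖η t‖ := by rw [norm_mul, Complex.norm_conj]
          _ ≤ r * M := by
              exact mul_le_mul_of_nonneg_left (hMb t htI) hr0.le
      have hB : |B| ≤ M := by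
        calc |B| ≤ ‖η t * Complex.exp (-Complex.I * (θmeas t : ℂ))‖ :=
              Complex.abs_re_le_norm _
          _ = ‖η t‖ := by rw [norm_mul, habse, mul_one]
          _ ≤ M := hMb t htI
      rw [Real.norm_eq_abs]
      have key : |2 * (N * R / r^3 - B / r)| ≤ 4 * M / r := by
        have h1 : |N * R / r^3| ≤ M / r := by
          rw [abs_div, abs_of_pos (by positivity : (0:ℝ) < r^3), abs_mul,
            div_le_div_iff₀ (by positivity) hr0]
          have hprod : |N| * |R| ≤ r * (r * M) := mul_le_mul hN hR (abs_nonneg _) hr0.le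
          nlinarith [mul_le_mul_of_nonneg_right hprod hr0.le, hr0]
        have h2 : |B / r| ≤ M / r := by
          rw [abs_div, abs_of_pos hr0]
          gcongr
        calc |2 * (N * R / r^3 - B / r)| = 2 * |N * R / r^3 - B / r| := by
              rw [abs_mul]; norm_num
          _ ≤ 2 * (|N * R / r^3| + |B / r|) := by
              have := abs_sub (N * R / r^3) (B / r)
              nlinarith [abs_sub_abs_le_abs_sub (N * R / r^3) (B / r)]
          _ ≤ 2 * (M / r + M / r) := by linarith
          _ = 4 * M / r := by ring
      calc |2 * (N * R / r^3 - B / r)| ≤ 4 * M / r := key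
        _ ≤ 8 * M / c := by
            rw [div_le_div_iff₀ hr0 hcpos]
            nlinarith [hrc, hMpos, hcpos]
      )
    intervalIntegrable_const
    (by -- h_diff
      apply Filter.Eventually.of_forall
      intro t ht ε hε
      rw [Set.uIoc_of_le hT.le] at ht
      have htI : t ∈ Set.Icc 0 T := Set.Ioc_subset_Icc_self ht
      have hw : ‖Complex.exp (Complex.I * (θmeas t : ℂ))‖ = 1 := habsexp t
      have := keyDeriv (ξ t) (η t) (Complex.exp (Complex.I * (θmeas t : ℂ))) hw ε
        (hball ε hε t htI)
      rwa [conjExp] at this)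
  have hfinal := hD.const_mul (1/2 : ℝ)
  refine hfinal.congr_deriv ?_
  symm
  rw [← intervalIntegral.integral_const_mul]
  apply intervalIntegral.integral_congr
  intro t ht
  rw [Set.uIcc_of_le hT.le] at ht
  have h0 : ξ t + (0:ℝ) • η t = ξ t := by simp
  simp only [h0]
  exact (finalId (ξ t) (η t) (Complex.exp (-Complex.I * (θmeas t : ℂ))) (hξ0 t ht)).symm
end

section
/- Let R > 0 and let a : [0,R] → ℝ be twice continuously differentiable with a'(0) = 0. For ℓ > 0 suppose u_ℓ : [0,R] → ℝ is twice continuously differentiable and satisfies u_ℓ(r) − ℓ² u_ℓ''(r) = a(r) for all r ∈ [0,R], with boundary conditions u_ℓ'(0) = 0 and u_ℓ(R) = a(R). Then ( ∫₀ᴿ (u_ℓ(r) − a(r))² dr )^{1/2} ≤ ℓ² ( ∫₀ᴿ a''(r)² dr )^{1/2}. In particular u_ℓ → a in L²(0,R) as ℓ → 0. -/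
open intervalIntegral

lemma cs_interval (R : ℝ) (hR : 0 ≤ R) (f g : ℝ → ℝ)
    (hf : ContinuousOn f (Set.Icc 0 R)) (hg : ContinuousOn g (Set.Icc 0 R)) :
    ∫ r in (0:ℝ)..R, f r * g r
      ≤ Real.sqrt (∫ r in (0:ℝ)..R, (f r)^2) * Real.sqrt (∫ r in (0:ℝ)..R, (g r)^2) := by
  have huIcc : Set.uIcc (0:ℝ) R = Set.Icc 0 R := Set.uIcc_of_le hR
  have hif : IntervalIntegrable (fun r => (f r)^2) MeasureTheory.volume 0 R := by
    apply ContinuousOn.intervalIntegrable; rw [huIcc]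
    exact (hf.pow 2)
  have hig : IntervalIntegrable (fun r => (g r)^2) MeasureTheory.volume 0 R := by
    apply ContinuousOn.intervalIntegrable; rw [huIcc]
    exact (hg.pow 2)
  have hifg : IntervalIntegrable (fun r => f r * g r) MeasureTheory.volume 0 R := by
    apply ContinuousOn.intervalIntegrable; rw [huIcc]
    exact hf.mul hg
  set A := ∫ r in (0:ℝ)..R, (f r)^2 with hA
  set B := ∫ r in (0:ℝ)..R, f r * g r with hB
  set C := ∫ r in (0:ℝ)..R, (g r)^2 with hC
  have hA0 : 0 ≤ A := intervalIntegral.integral_nonneg hR (fun x _ => sq_nonneg _)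
  have hC0 : 0 ≤ C := intervalIntegral.integral_nonneg hR (fun x _ => sq_nonneg _)
  have hquad : ∀ t : ℝ, 0 ≤ A * (t * t) + (2 * B) * t + C := by
    intro t
    have hexp : A * (t * t) + (2 * B) * t + C
        = ∫ r in (0:ℝ)..R, (t * f r + g r)^2 := by
      have : ∀ r : ℝ, (t * f r + g r)^2
          = (t * t) * (f r)^2 + ((2 * t) * (f r * g r) + (g r)^2) := by
        intro r; ring
      rw [intervalIntegral.integral_congr (fun r _ => this r)]
      rw [intervalIntegral.integral_add ((hif.const_mul (t*t))) ((hifg.const_mul (2*t)).add hig),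
        intervalIntegral.integral_add ((hifg.const_mul (2*t))) hig,
        intervalIntegral.integral_const_mul, intervalIntegral.integral_const_mul]
      ring
    rw [hexp]
    exact intervalIntegral.integral_nonneg hR (fun x _ => sq_nonneg _)
  have hdisc := discrim_le_zero hquad
  rw [discrim] at hdisc
  have hBsq : B^2 ≤ A * C := by nlinarith
  calc B ≤ |B| := le_abs_self B
    _ = Real.sqrt (B^2) := (Real.sqrt_sq_eq_abs B).symm
    _ ≤ Real.sqrt (A * C) := Real.sqrt_le_sqrt hBsq
    _ = Real.sqrt A * Real.sqrt C := Real.sqrt_mul hA0 C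

theorem elliptic_regularization_L2_error (R : ℝ) (hR : 0 < R)
    (a a' a'' : ℝ → ℝ)
    (ha : ∀ r ∈ Set.Icc 0 R, HasDerivAt a (a' r) r)
    (ha' : ∀ r ∈ Set.Icc 0 R, HasDerivAt a' (a'' r) r)
    (ha'' : ContinuousOn a'' (Set.Icc 0 R))
    (ha'0 : a' 0 = 0)
    (ℓ : ℝ) (hℓ : 0 < ℓ) (u u' u'' : ℝ → ℝ)
    (hu : ∀ r ∈ Set.Icc 0 R, HasDerivAt u (u' r) r)
    (hu' : ∀ r ∈ Set.Icc 0 R, HasDerivAt u' (u'' r) r)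
    (hu'' : ContinuousOn u'' (Set.Icc 0 R))
    (heq : ∀ r ∈ Set.Icc 0 R, u r - ℓ^2 * u'' r = a r)
    (hbc0 : u' 0 = 0) (hbcR : u R = a R) :
    Real.sqrt (∫ r in (0:ℝ)..R, (u r - a r)^2)
      ≤ ℓ^2 * Real.sqrt (∫ r in (0:ℝ)..R, (a'' r)^2) := by
  have hR' : (0:ℝ) ≤ R := hR.le
  have huIcc : Set.uIcc (0:ℝ) R = Set.Icc 0 R := Set.uIcc_of_le hR'
  have h0mem : (0:ℝ) ∈ Set.Icc (0:ℝ) R := ⟨le_refl _, hR'⟩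
  have hRmem : R ∈ Set.Icc (0:ℝ) R := ⟨hR', le_refl _⟩
  set e := fun r => u r - a r with he_def
  set e' := fun r => u' r - a' r with he'_def
  set e'' := fun r => u'' r - a'' r with he''_def
  have hde : ∀ r ∈ Set.Icc 0 R, HasDerivAt e (e' r) r :=
    fun r hr => (hu r hr).sub (ha r hr)
  have hde' : ∀ r ∈ Set.Icc 0 R, HasDerivAt e' (e'' r) r :=
    fun r hr => (hu' r hr).sub (ha' r hr)
  -- continuity
  have hce : ContinuousOn e (Set.Icc 0 R) :=
    fun r hr => ((hde r hr).continuousAt).continuousWithinAt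
  have hce' : ContinuousOn e' (Set.Icc 0 R) :=
    fun r hr => ((hde' r hr).continuousAt).continuousWithinAt
  have hce'' : ContinuousOn e'' (Set.Icc 0 R) := hu''.sub ha''
  -- integrabilities
  have hie' : IntervalIntegrable e' MeasureTheory.volume 0 R := by
    apply ContinuousOn.intervalIntegrable; rwa [huIcc]
  have hie'' : IntervalIntegrable e'' MeasureTheory.volume 0 R := by
    apply ContinuousOn.intervalIntegrable; rwa [huIcc]
  -- integration by parts : ∫ e * e'' = e R * e' R - e 0 * e' 0 - ∫ e' * e'
  have hibp : ∫ r in (0:ℝ)..R, e r * e'' r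
      = e R * e' R - e 0 * e' 0 - ∫ r in (0:ℝ)..R, e' r * e' r := by
    apply intervalIntegral.integral_mul_deriv_eq_deriv_mul
    · intro x hx; exact hde x (huIcc ▸ hx)
    · intro x hx; exact hde' x (huIcc ▸ hx)
    · exact hie'
    · exact hie''
  have heR : e R = 0 := by simp [he_def, hbcR]
  have he'0 : e' 0 = 0 := by simp [he'_def, hbc0, ha'0]
  have hibp' : ∫ r in (0:ℝ)..R, e r * e'' r = - ∫ r in (0:ℝ)..R, e' r * e' r := by
    rw [hibp, heR, he'0]; ring
  -- pointwise identity : e r = ℓ^2 * (e'' r + a'' r)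
  have hpt : ∀ r ∈ Set.Icc (0:ℝ) R, (e r)^2
      = ℓ^2 * (e r * e'' r) + ℓ^2 * (e r * a'' r) := by
    intro r hr
    have h1 := heq r hr
    have h2 : e r = ℓ^2 * (e'' r + a'' r) := by
      simp only [he_def, he''_def]; nlinarith [h1]
    calc (e r)^2 = e r * (ℓ^2 * (e'' r + a'' r)) := by rw [← h2]; ring
      _ = ℓ^2 * (e r * e'' r) + ℓ^2 * (e r * a'' r) := by ring
  have hiee'' : IntervalIntegrable (fun r => e r * e'' r) MeasureTheory.volume 0 R := by
    apply ContinuousOn.intervalIntegrable; rw [huIcc]; exact hce.mul hce''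
  have hiea'' : IntervalIntegrable (fun r => e r * a'' r) MeasureTheory.volume 0 R := by
    apply ContinuousOn.intervalIntegrable; rw [huIcc]; exact hce.mul ha''
  have hsplit : ∫ r in (0:ℝ)..R, (e r)^2
      = ℓ^2 * (∫ r in (0:ℝ)..R, e r * e'' r) + ℓ^2 * (∫ r in (0:ℝ)..R, e r * a'' r) := by
    rw [intervalIntegral.integral_congr (fun r hr => hpt r (huIcc ▸ hr))]
    rw [intervalIntegral.integral_add (hiee''.const_mul _) (hiea''.const_mul _),
      intervalIntegral.integral_const_mul, intervalIntegral.integral_const_mul]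
  have he'sq : 0 ≤ ∫ r in (0:ℝ)..R, e' r * e' r :=
    intervalIntegral.integral_nonneg hR' (fun x _ => mul_self_nonneg _)
  have hkey : ∫ r in (0:ℝ)..R, (e r)^2 ≤ ℓ^2 * ∫ r in (0:ℝ)..R, e r * a'' r := by
    rw [hsplit, hibp']
    nlinarith [sq_nonneg ℓ]
  have hCS := cs_interval R hR' e a'' hce ha''
  set X := Real.sqrt (∫ r in (0:ℝ)..R, (e r)^2) with hX
  set Y := Real.sqrt (∫ r in (0:ℝ)..R, (a'' r)^2) with hY
  have hXnn : 0 ≤ X := Real.sqrt_nonneg _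
  have hYnn : 0 ≤ Y := Real.sqrt_nonneg _
  have hXsq : X^2 = ∫ r in (0:ℝ)..R, (e r)^2 :=
    Real.sq_sqrt (intervalIntegral.integral_nonneg hR' (fun x _ => sq_nonneg _))
  have hXineq : X^2 ≤ ℓ^2 * (X * Y) := by
    rw [hXsq]
    calc ∫ r in (0:ℝ)..R, (e r)^2 ≤ ℓ^2 * ∫ r in (0:ℝ)..R, e r * a'' r := hkey
      _ ≤ ℓ^2 * (X * Y) := by
          apply mul_le_mul_of_nonneg_left hCS (sq_nonneg ℓ)
  show X ≤ ℓ^2 * Y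
  rcases eq_or_lt_of_le hXnn with h0 | h0
  · rw [← h0]; positivity
  · nlinarith
end

section
/- Let g₁, g₂ : ℝ → ℝ and let ξ : ℝ → ℝ² be differentiable with ξ(t) ≠ 0 for all t and dξ/dt (t) = ( g₁(‖ξ(t)‖) I + g₂(‖ξ(t)‖) J ) ξ(t), where I is the 2×2 identity matrix and J = [[0, −1], [1, 0]]. Then r(t) := ‖ξ(t)‖ is differentiable and satisfies dr/dt (t) = g₁(r(t)) r(t) for all t. -/
open Matrix

theorem cartesian_to_radial_oscillation_model (g₁ g₂ : ℝ → ℝ)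
    (ξ : ℝ → EuclideanSpace ℝ (Fin 2)) (hξ0 : ∀ t : ℝ, ξ t ≠ 0)
    (hξ : ∀ t : ℝ, HasDerivAt ξ
      (Matrix.toEuclideanLin
        ((g₁ ‖ξ t‖) • (1 : Matrix (Fin 2) (Fin 2) ℝ)
          + (g₂ ‖ξ t‖) • (!![0, -1; 1, 0] : Matrix (Fin 2) (Fin 2) ℝ))
        (ξ t)) t) :
    ∀ t : ℝ, HasDerivAt (fun s : ℝ => ‖ξ s‖) (g₁ ‖ξ t‖ * ‖ξ t‖) t := by
  intro t
  set v := Matrix.toEuclideanLin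
        ((g₁ ‖ξ t‖) • (1 : Matrix (Fin 2) (Fin 2) ℝ)
          + (g₂ ‖ξ t‖) • (!![0, -1; 1, 0] : Matrix (Fin 2) (Fin 2) ℝ)) (ξ t) with hv
  have hinner : HasDerivAt (fun s => (inner ℝ (ξ s) (ξ s) : ℝ))
      (inner ℝ (ξ t) v + inner ℝ v (ξ t)) t := (hξ t).inner ℝ (hξ t)
  have hiv : (inner ℝ (ξ t) v : ℝ) = g₁ ‖ξ t‖ * ‖ξ t‖ ^ 2 := by
    rw [hv, Matrix.toEuclideanLin_apply]
    simp only [EuclideanSpace.inner_eq_star_dotProduct]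
    simp [Matrix.mulVec, dotProduct, Fin.sum_univ_two, Matrix.one_apply,
      EuclideanSpace.norm_eq, Fin.sum_univ_two]
    rw [Real.sq_sqrt (by positivity)]
    ring
  have hvi : (inner ℝ v (ξ t) : ℝ) = g₁ ‖ξ t‖ * ‖ξ t‖ ^ 2 := by
    rw [real_inner_comm]; exact hiv
  rw [hiv, hvi] at hinner
  have hr : ‖ξ t‖ ≠ 0 := norm_ne_zero_iff.mpr (hξ0 t)
  have hne : (inner ℝ (ξ t) (ξ t) : ℝ) ≠ 0 := by
    rw [real_inner_self_eq_norm_sq]; positivity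
  have := hinner.sqrt hne
  have heq : (fun s : ℝ => ‖ξ s‖) = fun s => Real.sqrt (inner ℝ (ξ s) (ξ s)) := by
    funext s; rw [real_inner_self_eq_norm_sq, Real.sqrt_sq (norm_nonneg _)]
  rw [heq]
  convert this using 1
  rw [real_inner_self_eq_norm_sq, Real.sqrt_sq (norm_nonneg _)]
  field_simp
  ring
end
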